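/- Every subgradient v of g(x) = min_{u ∈ D} |aᵀ(u − x)| at any point x satisfies aᵀb = 0 ⟹ vᵀb = 0; that is, v = λ·a for some scalar λ ∈ [−1, 1]. -/
import Mathlib


/-- Every subgradient `v` of `g x = min_{u ∈ D} |aᵀ(u − x)|` is orthogonal to the
orthogonal complement of `a`, i.e. `v = λ·a` for some `λ ∈ [−1,1]`. -/
theorem stmt11 (d : ℕ) (a : Fin d → ℝ) (ha : a ≠ 0)
    (D : Set (Fin d → ℝ)) (hne : D.Nonempty) (hcomp : IsCompact D) (hconv : Convex ℝ D)
    (h0 : (0 : Fin d → ℝ) ∈ D)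
    (g : (Fin d → ℝ) → ℝ)
    (hg : ∀ x, g x = sInf ((fun u => |∑ i, a i * (u i - x i)|) '' D))
    (x v : Fin d → ℝ)
    (hv : ∀ y, g y ≥ g x + ∑ i, v i * (y i - x i)) :
    (∀ c : Fin d → ℝ, (∑ i, a i * c i) = 0 → (∑ i, v i * c i) = 0) ∧
    ∃ lam : ℝ, lam ∈ Set.Icc (-1 : ℝ) 1 ∧ v = lam • a := by
  classical
  -- Part 1: orthogonality
  have key : ∀ c : Fin d → ℝ, (∑ i, a i * c i) = 0 → (∑ i, v i * c i) = 0 := by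
    intro c hc
    have hgshift : ∀ s : ℝ, g (fun i => x i + s * c i) = g x := by
      intro s
      rw [hg, hg]
      congr 1
      apply Set.image_congr'
      intro u
      congr 1
      have h1 : ∑ i, a i * (u i - (x i + s * c i))
          = (∑ i, a i * (u i - x i)) - s * ∑ i, a i * c i := by
        rw [Finset.mul_sum, ← Finset.sum_sub_distrib]
        apply Finset.sum_congr rfl
        intros; ring
      rw [h1, hc, mul_zero, sub_zero]
    have hsum : ∀ s : ℝ, ∑ i, v i * ((x i + s * c i) - x i) = s * ∑ i, v i * c i := by
      intro s
      rw [Finset.mul_sum]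
      apply Finset.sum_congr rfl
      intros; ring
    have h1 := hv (fun i => x i + 1 * c i)
    have h2 := hv (fun i => x i + (-1) * c i)
    rw [hgshift 1] at h1
    rw [hgshift (-1)] at h2
    rw [hsum 1] at h1
    rw [hsum (-1)] at h2
    nlinarith [h1, h2]
  refine ⟨key, ?_⟩
  -- positivity of aᵀa
  obtain ⟨j, hj⟩ : ∃ j, a j ≠ 0 := by
    by_contra h
    push_neg at h
    exact ha (funext h)
  have hS : 0 < ∑ i, a i * a i := by
    have h1 : a j * a j ≤ ∑ i, a i * a i :=
      Finset.single_le_sum (fun i _ => mul_self_nonneg (a i)) (Finset.mem_univ j)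
    have h2 : 0 < a j * a j := mul_self_pos.mpr hj
    linarith
  set S := ∑ i, a i * a i with hSdef
  set lam := (∑ i, v i * a i) / S with hlam
  -- v = lam • a
  have hac : ∑ i, a i * (v i - lam * a i) = 0 := by
    have h1 : ∑ i, a i * (v i - lam * a i)
        = (∑ i, v i * a i) - lam * S := by
      rw [hSdef, Finset.mul_sum, ← Finset.sum_sub_distrib]
      apply Finset.sum_congr rfl
      intros; ring
    rw [h1, hlam, div_mul_cancel₀ _ (ne_of_gt hS), sub_self]
  have hvc : ∑ i, v i * (v i - lam * a i) = 0 := key _ hac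
  have hcc : ∑ i, (v i - lam * a i) * (v i - lam * a i) = 0 := by
    have h1 : ∑ i, (v i - lam * a i) * (v i - lam * a i)
        = (∑ i, v i * (v i - lam * a i)) - lam * ∑ i, a i * (v i - lam * a i) := by
      rw [Finset.mul_sum, ← Finset.sum_sub_distrib]
      apply Finset.sum_congr rfl
      intros; ring
    rw [h1, hvc, hac, mul_zero, sub_zero]
  have hva : v = lam • a := by
    funext i
    have h2 := (Finset.sum_eq_zero_iff_of_nonneg
      (fun i _ => mul_self_nonneg (v i - lam * a i))).mp hcc i (Finset.mem_univ i)
    have h3 : v i - lam * a i = 0 := by nlinarith [h2]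
    simp only [Pi.smul_apply, smul_eq_mul]
    linarith
  -- Lipschitz bound: g y ≤ g x + |aᵀ(y - x)|
  have lip : ∀ y : Fin d → ℝ, g y ≤ g x + |∑ i, a i * (y i - x i)| := by
    intro y
    rw [hg x, hg y]
    have hbdd : BddBelow ((fun u => |∑ i, a i * (u i - y i)|) '' D) := by
      refine ⟨0, ?_⟩
      rintro b ⟨u, hu, rfl⟩
      positivity
    have hne' : ((fun u => |∑ i, a i * (u i - x i)|) '' D).Nonempty := hne.image _
    have hstep : sInf ((fun u => |∑ i, a i * (u i - y i)|) '' D)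
        - |∑ i, a i * (y i - x i)|
        ≤ sInf ((fun u => |∑ i, a i * (u i - x i)|) '' D) := by
      apply le_csInf hne'
      rintro b ⟨u, hu, rfl⟩
      have hle : sInf ((fun u => |∑ i, a i * (u i - y i)|) '' D) ≤ |∑ i, a i * (u i - y i)| :=
        csInf_le hbdd ⟨u, hu, rfl⟩
      have hsum : ∑ i, a i * (u i - y i)
          = (∑ i, a i * (u i - x i)) - ∑ i, a i * (y i - x i) := by
        rw [← Finset.sum_sub_distrib]
        apply Finset.sum_congr rfl
        intros; ring
      have htri : |∑ i, a i * (u i - y i)|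
          ≤ |∑ i, a i * (u i - x i)| + |∑ i, a i * (y i - x i)| := by
        rw [hsum]
        exact abs_sub _ _
      linarith
    linarith
  -- |lam| ≤ 1
  have haux : ∀ s : ℝ, (∑ i, v i * ((x i + s * a i) - x i)) = s * lam * S := by
    intro s
    have : ∀ i ∈ Finset.univ, v i * ((x i + s * a i) - x i) = s * (lam * (a i * a i)) := by
      intro i _
      have : v i = lam * a i := by rw [hva]; simp
      rw [this]; ring
    rw [Finset.sum_congr rfl this, ← Finset.mul_sum, ← Finset.mul_sum, hSdef]
    ring
  have habs : ∀ s : ℝ, |∑ i, a i * ((x i + s * a i) - x i)| = |s| * S := by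
    intro s
    have : ∀ i ∈ Finset.univ, a i * ((x i + s * a i) - x i) = s * (a i * a i) := by
      intro i _; ring
    rw [Finset.sum_congr rfl this, ← Finset.mul_sum, abs_mul, abs_of_pos hS]
  have hb1 : lam ≤ 1 := by
    have h1 := hv (fun i => x i + 1 * a i)
    have h2 := lip (fun i => x i + 1 * a i)
    rw [haux 1] at h1
    rw [habs 1] at h2
    simp only [abs_one, one_mul] at h1 h2
    nlinarith
  have hb2 : -1 ≤ lam := by
    have h1 := hv (fun i => x i + (-1) * a i)
    have h2 := lip (fun i => x i + (-1) * a i)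
    rw [haux (-1)] at h1
    rw [habs (-1)] at h2
    simp only [abs_neg, abs_one, one_mul] at h1 h2
    nlinarith
  exact ⟨lam, ⟨hb2, hb1⟩, hva⟩
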